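/- Let 0 ≤ δ < u < 1/2 be reals and let n, m be positive integers satisfying 5 ≤ m ≤ n(u−δ), (20/m)·log(m/u) ≤ log((1−u)/u), and ⌈n(u−δ)⌉ ≤ ⌊nu⌋. Set c := (1 − u + 1/n)/(u − 1/n) and α := 1/n + 2·log n/(n·log c). Then α < u/2 − 1/n, and ( ∑_{j ∈ ℤ, n(u−δ) ≤ j < n(u−α)} C(n,j) ) / ( ∑_{j ∈ ℤ, n(u−δ) ≤ j ≤ nu} C(n,j) ) ≤ δ/(n·√u). -/

import Mathlib

open scoped BigOperators

private lemma geom_aux (r : ℝ) (h0 : 0 ≤ r) (h1 : r < 1) (K : ℕ) :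
    ∑ i ∈ Finset.range K, r^i ≤ 1/(1-r) := by
  have h2 : (0:ℝ) < 1 - r := by linarith
  have h3 : ∑ i ∈ Finset.range K, r^i = (1 - r^K)/(1-r) := by
    rw [geom_sum_eq h1.ne, div_eq_div_iff (by linarith) h2.ne']; ring
  rw [h3]
  gcongr
  nlinarith [pow_nonneg h0 K]

set_option maxHeartbeats 1000000 in

private lemma choose_cast_id (n k : ℕ) (hkn : k < n) :
    ((n.choose (k+1) : ℝ)) * ((k:ℝ)+1) = (n.choose k : ℝ) * ((n:ℝ) - k) := by
  have h1 := Nat.choose_succ_right_eq n k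
  have h2 : ((n.choose (k+1) * (k+1) : ℕ) : ℝ) = ((n.choose k * (n - k) : ℕ) : ℝ) := by
    exact_mod_cast congrArg (fun t : ℕ => (t:ℝ)) h1
  push_cast [Nat.cast_sub hkn.le] at h2
  linarith

private lemma choose_step (n : ℕ) (u cv : ℝ) (hn : 0 < n)
    (hden : 0 < u - 1/(n:ℝ)) (hu1 : u ≤ 1)
    (hcv : cv = (1 - u + 1/(n:ℝ))/(u - 1/(n:ℝ))) :
    ∀ k : ℕ, (k:ℝ) + 1 ≤ (n:ℝ)*u - 1 → cv * (n.choose k : ℝ) ≤ (n.choose (k+1) : ℝ) := by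
  intro k hk
  have hnR : (0:ℝ) < n := Nat.cast_pos.mpr hn
  have hkn : k < n := by
    have h1 : (k:ℝ) < (n:ℝ) := by nlinarith
    exact_mod_cast h1
  have hid := choose_cast_id n k hkn
  have hck : cv * ((k:ℝ)+1) ≤ (n:ℝ) - k := by
    rw [hcv, div_mul_eq_mul_div, div_le_iff₀ hden]
    have e : ((n:ℝ)-k)*(u-1/(n:ℝ)) - (1-u+1/(n:ℝ))*((k:ℝ)+1)
        = ((n:ℝ)+1)*(u-1/(n:ℝ)) - ((k:ℝ)+1) := by ring
    have e2 : ((n:ℝ)+1)*(u-1/(n:ℝ)) = (n:ℝ)*u - 1 + (u - 1/(n:ℝ)) := by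
      field_simp
    nlinarith [hden, hk]
  have hCnn : (0:ℝ) ≤ (n.choose k : ℝ) := by positivity
  have hkpos : (0:ℝ) < (k:ℝ)+1 := by positivity
  nlinarith [mul_le_mul_of_nonneg_left hck hCnn, hid]

private lemma choose_pow (n : ℕ) (u cv : ℝ) (hn : 0 < n)
    (hden : 0 < u - 1/(n:ℝ)) (hu1 : u ≤ 1)
    (hcv : cv = (1 - u + 1/(n:ℝ))/(u - 1/(n:ℝ))) :
    ∀ d a : ℕ, ((a:ℝ) + d ≤ (n:ℝ)*u - 1) → cv^d * (n.choose a : ℝ) ≤ (n.choose (a+d) : ℝ) := by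
  have hcv0 : 0 ≤ cv := by
    rw [hcv]
    apply div_nonneg _ hden.le
    have : (0:ℝ) < 1/(n:ℝ) := by positivity
    linarith
  intro d
  induction d with
  | zero => intro a ha; simpa using le_refl _
  | succ d ih =>
    intro a ha
    push_cast at ha
    have h1 : cv^d * (n.choose a:ℝ) ≤ n.choose (a+d) := ih a (by push_cast; linarith)
    have h2 : cv * (n.choose (a+d):ℝ) ≤ n.choose (a+d+1) :=
      choose_step n u cv hn hden hu1 hcv (a+d) (by push_cast; linarith)
    calc cv^(d+1) * (n.choose a:ℝ) = cv * (cv^d * (n.choose a:ℝ)) := by ring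
      _ ≤ cv * (n.choose (a+d):ℝ) := mul_le_mul_of_nonneg_left h1 hcv0
      _ ≤ (n.choose (a+d+1):ℝ) := h2
      _ = (n.choose (a+(d+1)):ℝ) := by rw [Nat.add_assoc]

private lemma choose_top (n b₁ : ℕ) (u cv : ℝ) (hn : 0 < n)
    (hden : 0 < u - 1/(n:ℝ)) (hu1 : u ≤ 1)
    (hcv : cv = (1 - u + 1/(n:ℝ))/(u - 1/(n:ℝ)))
    (hs5 : 5 ≤ (n:ℝ)*u) (hb : ((b₁:ℝ)+1) ≤ (n:ℝ)*u) (hbn : b₁ < n) :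
    (4/5)*cv*(n.choose b₁ : ℝ) ≤ (n.choose (b₁+1) : ℝ) := by
  have hnR : (0:ℝ) < n := Nat.cast_pos.mpr hn
  have hid := choose_cast_id n b₁ hbn
  have hcv0 : 0 < cv := by
    rw [hcv]
    apply div_pos _ hden
    have h1 : (0:ℝ) < 1/(n:ℝ) := by positivity
    linarith
  have hDid : (n:ℝ)*(u - 1/(n:ℝ)) = (n:ℝ)*u - 1 := by
    rw [mul_sub, mul_one_div, div_self hnR.ne']
  have hcvD : cv*(u-1/(n:ℝ)) = 1-u+1/(n:ℝ) := by
    rw [hcv, div_mul_cancel₀ _ hden.ne']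
  have hNid : (n:ℝ)*(1-u+1/(n:ℝ)) = (n:ℝ) - (n:ℝ)*u + 1 := by
    rw [mul_add, mul_sub, mul_one, mul_one_div, div_self hnR.ne']
  have hcid : cv*((n:ℝ)*u-1) = (n:ℝ) - (n:ℝ)*u + 1 := by
    rw [← hDid, ← hNid, ← hcvD]; ring
  have hck : (4/5) * cv * ((b₁:ℝ)+1) ≤ (n:ℝ) - b₁ := by
    nlinarith [hcid, hcv0, hs5, hb]
  have hCnn : (0:ℝ) ≤ (n.choose b₁ : ℝ) := by positivity
  have hkpos : (0:ℝ) < (b₁:ℝ)+1 := by positivity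
  nlinarith [mul_le_mul_of_nonneg_left hck hCnn, hid]

set_option maxHeartbeats 1000000 in
theorem binomial_window_lower_part_small
    (u δ : ℝ) (n m : ℕ) (hn : 0 < n) (hm : 0 < m)
    (hδ0 : 0 ≤ δ) (hδu : δ < u) (hu : u < 1 / 2)
    (hm5 : 5 ≤ m) (hmbound : (m : ℝ) ≤ (n : ℝ) * (u - δ))
    (hlog : 20 / (m : ℝ) * Real.log ((m : ℝ) / u) ≤ Real.log ((1 - u) / u))
    (hwin : ⌈(n : ℝ) * (u - δ)⌉ ≤ ⌊(n : ℝ) * u⌋)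
    (c α : ℝ)
    (hc : c = (1 - u + 1 / (n : ℝ)) / (u - 1 / (n : ℝ)))
    (hα : α = 1 / (n : ℝ) + 2 * Real.log n / ((n : ℝ) * Real.log c)) :
    α < u / 2 - 1 / (n : ℝ)
    ∧ (∑ j ∈ (Finset.Icc (0 : ℤ) (n : ℤ)).filter
          (fun j : ℤ => (n : ℝ) * (u - δ) ≤ (j : ℝ) ∧ (j : ℝ) < (n : ℝ) * (u - α)),
        (n.choose j.toNat : ℝ))
      / (∑ j ∈ (Finset.Icc (0 : ℤ) (n : ℤ)).filter
          (fun j : ℤ => (n : ℝ) * (u - δ) ≤ (j : ℝ) ∧ (j : ℝ) ≤ (n : ℝ) * u),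
        (n.choose j.toNat : ℝ))
      ≤ δ / ((n : ℝ) * Real.sqrt u) := by
  have hu0 : 0 < u := lt_of_le_of_lt hδ0 hδu
  have hnR : (0:ℝ) < n := Nat.cast_pos.mpr hn
  have hmR : (0:ℝ) < m := Nat.cast_pos.mpr hm
  have hm1 : (1:ℝ) ≤ m := Nat.one_le_cast.mpr hm
  have h1n : (0:ℝ) < 1/(n:ℝ) := by positivity
  set s : ℝ := (n:ℝ) * u with hs
  have hms : (m:ℝ) ≤ s := le_trans hmbound (by nlinarith)
  -- m ≥ 21
  have hm21 : (21:ℝ) ≤ m := by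
    by_contra h
    push_neg at h
    have h20n : m ≤ 20 := by
      by_contra h'
      push_neg at h'
      have : (21:ℝ) ≤ m := by exact_mod_cast h'
      linarith
    have h20 : (m:ℝ) ≤ 20 := by exact_mod_cast h20n
    have hmu1 : (1:ℝ) < (m:ℝ)/u := by
      rw [lt_div_iff₀ hu0]; linarith
    have hlogmu : 0 < Real.log ((m:ℝ)/u) := Real.log_pos hmu1
    have h1 : (1:ℝ) ≤ 20/(m:ℝ) := by rw [le_div_iff₀ hmR]; linarith
    have h2 : Real.log ((1-u)/u) < Real.log ((m:ℝ)/u) := by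
      apply Real.log_lt_log (div_pos (by linarith) hu0)
      rw [div_lt_div_iff₀ hu0 hu0]
      nlinarith
    nlinarith [hlog, mul_le_mul_of_nonneg_right h1 hlogmu.le]
  have hs21 : (21:ℝ) ≤ s := le_trans hm21 hms
  have hinv : 1/(n:ℝ) ≤ u/21 := by
    rw [div_le_div_iff₀ hnR (by norm_num)]; nlinarith
  have hden : 0 < u - 1/(n:ℝ) := by linarith
  have hc1 : 1 < c := by
    rw [hc, lt_div_iff₀ hden]; linarith
  have hc0 : 0 < c := by linarith
  have hcc0 : (1-u)/u ≤ c := by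
    rw [hc, div_le_div_iff₀ hu0 hden]; nlinarith
  have hlogc : 0 < Real.log c := Real.log_pos hc1
  have hn43 : (43:ℝ) ≤ n := by
    have h42 : (42:ℝ) < n := by nlinarith
    have h' : (42:ℕ) < n := by exact_mod_cast h42
    have : (43:ℕ) ≤ n := h'
    exact_mod_cast this
  have hlogn : 1 ≤ Real.log n := by
    rw [Real.le_log_iff_exp_le hnR]
    have := Real.exp_one_lt_d9
    linarith
  -- log bound from hlog
  set L : ℝ := Real.log ((m:ℝ)/u) with hL
  have hmu42 : (42:ℝ) ≤ (m:ℝ)/u := by rw [le_div_iff₀ hu0]; linarith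
  have hL1 : 1 ≤ L := by
    rw [hL, Real.le_log_iff_exp_le (div_pos hmR hu0)]
    linarith [Real.exp_one_lt_d9]
  have hLc : 20/(m:ℝ) * L ≤ Real.log c :=
    le_trans hlog (Real.log_le_log (div_pos (by linarith) hu0) hcc0)
  -- key bound on 2 log n / log c
  have key1 : 2 * Real.log n / Real.log c < s/2 - 2 := by
    have h1 : 2 * Real.log n / Real.log c ≤ 2 * Real.log n / (20/(m:ℝ) * L) := by
      apply div_le_div_of_nonneg_left (by linarith) (by positivity) hLc
    refine lt_of_le_of_lt h1 ?_
    have hlogn2 : Real.log n ≤ s/(m:ℝ) - 1 + L := by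
      have hns : (n:ℝ) = (s/(m:ℝ)) * ((m:ℝ)/u) := by rw [hs]; field_simp
      have hlogeq : Real.log n = Real.log (s/(m:ℝ)) + L := by
        rw [hns, Real.log_mul (by positivity) (by positivity)]
      rw [hlogeq]
      have := Real.log_le_sub_one_of_pos (show (0:ℝ) < s/(m:ℝ) by positivity)
      linarith
    have e2 : (s/2 - 2)*(20/(m:ℝ)*L) = ((10*s-40)*L)/(m:ℝ) := by
      field_simp; ring
    rw [div_lt_iff₀ (by positivity), e2, lt_div_iff₀ hmR]
    have hml : (m:ℝ) * Real.log n ≤ s - m + m*L := by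
      have e1 : (m:ℝ) * (s/(m:ℝ) - 1 + L) = s - m + m*L := by field_simp
      calc (m:ℝ)*Real.log n ≤ (m:ℝ)*(s/(m:ℝ) - 1 + L) :=
            mul_le_mul_of_nonneg_left hlogn2 hmR.le
        _ = _ := e1
    nlinarith [hml, mul_nonneg (by linarith : (0:ℝ) ≤ L - 1)
      (by linarith : (0:ℝ) ≤ 10*s - 40 - 2*m)]
  have hpart1 : α < u / 2 - 1 / (n:ℝ) := by
    rw [hα]
    have h2 : 2 * Real.log n / ((n:ℝ) * Real.log c)
        = (2 * Real.log n / Real.log c) / n := by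
      rw [div_div, mul_comm (Real.log c) ((n:ℝ))]
    rw [h2, ← add_div, div_lt_iff₀ hnR]
    have e3 : (u/2 - 1/(n:ℝ))*(n:ℝ) = s/2 - 1 := by rw [hs]; field_simp
    rw [e3]
    linarith [key1]
  refine ⟨hpart1, ?_⟩
  -- abbreviations
  have hXnn : 0 ≤ 2*Real.log n/Real.log c := by positivity
  have hnα : (n:ℝ)*α = 1 + 2*Real.log n/Real.log c := by
    rw [hα]; field_simp
  have hnα1 : 1 ≤ (n:ℝ)*α := by rw [hnα]; linarith
  -- exp identity : c^(nα) = c n²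
  have hcnα : Real.exp (((n:ℝ)*α)*Real.log c) = c*(n:ℝ)^2 := by
    rw [hnα, add_mul, one_mul, Real.exp_add, Real.exp_log hc0]
    congr 1
    rw [div_mul_cancel₀ _ hlogc.ne', two_mul, Real.exp_add, Real.exp_log hnR, sq]
  -- the top index j₀
  set j₀ : ℤ := ⌊s⌋ with hj₀
  have hj₀le : (j₀:ℝ) ≤ s := Int.floor_le _
  have hj₀gt : s - 1 < (j₀:ℝ) := Int.sub_one_lt_floor s
  have hj₀0 : 0 ≤ j₀ := Int.floor_nonneg.mpr (by positivity)
  have hj₀n : j₀ ≤ (n:ℤ) := by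
    have h0 : s ≤ (n:ℝ)*(1/2) := mul_le_mul_of_nonneg_left hu.le hnR.le
    have h1 : (j₀:ℝ) ≤ (n:ℝ) := le_trans hj₀le (by linarith only [h0, hnR])
    exact_mod_cast h1
  have hwin' : (n:ℝ)*(u-δ) ≤ (j₀:ℝ) := by
    have h1 : ((⌈(n:ℝ)*(u-δ)⌉:ℤ):ℝ) ≤ ((j₀:ℤ):ℝ) := by exact_mod_cast hwin
    exact le_trans (Int.le_ceil _) h1
  have hj₀mem : j₀ ∈ (Finset.Icc (0 : ℤ) (n : ℤ)).filter
      (fun j : ℤ => (n : ℝ) * (u - δ) ≤ (j : ℝ) ∧ (j : ℝ) ≤ (n : ℝ) * u) :=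
    Finset.mem_filter.mpr ⟨Finset.mem_Icc.mpr ⟨hj₀0, hj₀n⟩, hwin', hj₀le⟩
  have hb₀n : j₀.toNat ≤ n := by omega
  have hC0pos : (0:ℝ) < (n.choose j₀.toNat : ℝ) := by
    exact_mod_cast Nat.choose_pos hb₀n
  have hSden : (n.choose j₀.toNat : ℝ) ≤ ∑ j ∈ (Finset.Icc (0 : ℤ) (n : ℤ)).filter
      (fun j : ℤ => (n : ℝ) * (u - δ) ≤ (j : ℝ) ∧ (j : ℝ) ≤ (n : ℝ) * u),
      (n.choose j.toNat : ℝ) :=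
    Finset.single_le_sum (f := fun j : ℤ => (n.choose j.toNat : ℝ)) (fun i _ => by positivity) hj₀mem
  have hDenpos : (0:ℝ) < ∑ j ∈ (Finset.Icc (0 : ℤ) (n : ℤ)).filter
      (fun j : ℤ => (n : ℝ) * (u - δ) ≤ (j : ℝ) ∧ (j : ℝ) ≤ (n : ℝ) * u),
      (n.choose j.toNat : ℝ) := lt_of_lt_of_le hC0pos hSden
  rcases le_or_gt δ α with hcase | hcase
  · -- lower window empty
    have hemp : (Finset.Icc (0 : ℤ) (n : ℤ)).filter
        (fun j : ℤ => (n : ℝ) * (u - δ) ≤ (j : ℝ) ∧ (j : ℝ) < (n : ℝ) * (u - α)) = ∅ := by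
      apply Finset.filter_false_of_mem
      intro j _
      rintro ⟨h1, h2⟩
      have h3 : (n:ℝ)*(u-α) ≤ (n:ℝ)*(u-δ) :=
        mul_le_mul_of_nonneg_left (by linarith only [hcase]) hnR.le
      linarith only [h1, h2, h3]
    rw [hemp, Finset.sum_empty, zero_div]
    exact div_nonneg hδ0 (by positivity)
  · -- main case : α < δ
    -- geometry of the index window
    have hyval : (n:ℝ)*(u-α) = s - (n:ℝ)*α := by rw [hs]; ring
    set j₂ : ℤ := ⌈(n:ℝ)*(u-α)⌉ - 1 with hj₂
    have hj₂lt : (j₂:ℝ) < (n:ℝ)*(u-α) := by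
      have h1 := Int.ceil_lt_add_one ((n:ℝ)*(u-α))
      have h2 : ((j₂:ℤ):ℝ) = ((⌈(n:ℝ)*(u-α)⌉:ℤ):ℝ) - 1 := by rw [hj₂]; push_cast; ring
      linarith
    have hj₂j₀ : j₂ ≤ j₀ - 1 := by
      have h1 : ((j₂+1:ℤ):ℝ) ≤ s := by
        have h2 : ((j₂+1:ℤ):ℝ) < (n:ℝ)*(u-α) + 1 := by push_cast; linarith
        rw [hyval] at h2; linarith
      have := Int.le_floor.mpr h1
      omega
    set j₁ : ℤ := ⌈(n:ℝ)*(u-δ)⌉ with hj₁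
    have hj₁pos : 1 ≤ j₁ := by
      have h0 : (0:ℝ) < (n:ℝ)*(u-δ) := lt_of_lt_of_le hmR hmbound
      exact Int.ceil_pos.mpr h0
    have hu1 : u ≤ 1 := by linarith
    have bpow := choose_pow n u c hn hden hu1 hc
    have hb₀R : ((j₀.toNat:ℕ):ℝ) = (j₀:ℝ) := by exact_mod_cast Int.toNat_of_nonneg hj₀0
    have hj₀1 : 1 ≤ j₀ := by
      have h1 : (1:ℝ) ≤ (j₀:ℝ) := by linarith
      exact_mod_cast h1
    have bfinal : (4/5) * c * (n.choose (j₀.toNat - 1) : ℝ) ≤ (n.choose j₀.toNat : ℝ) := by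
      obtain ⟨b₁, hb₁⟩ : ∃ b₁, j₀.toNat = b₁ + 1 := ⟨j₀.toNat - 1, by omega⟩
      have hb₁R : ((b₁:ℕ):ℝ) = (j₀:ℝ) - 1 := by
        rw [← hb₀R, hb₁]; push_cast; ring
      have hb₁n : b₁ < n := by omega
      have hb : ((b₁:ℝ)+1) ≤ (n:ℝ)*u := by rw [hb₁R]; rw [← hs]; linarith
      have h3 := choose_top n b₁ u c hn hden hu1 hc (by rw [← hs]; linarith) hb hb₁n
      have hb₁' : j₀.toNat - 1 = b₁ := by omega
      rw [hb₁', hb₁]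
      exact h3
    -- per-term bound on the lower window
    have hcinv0 : 0 ≤ c⁻¹ := by positivity
    have hcinv1 : c⁻¹ < 1 := by
      rw [inv_lt_one_iff₀]; right; exact hc1
    have perterm : ∀ j ∈ Finset.Icc j₁ j₂, (n.choose j.toNat : ℝ)
        ≤ (5/4) * (n.choose j₀.toNat : ℝ) * (c⁻¹)^((j₀ - j).toNat) := by
      intro j hj
      rw [Finset.mem_Icc] at hj
      have hj0 : 0 ≤ j := le_trans (by omega : (0:ℤ) ≤ j₁) hj.1
      have hjj₀ : j ≤ j₀ - 1 := le_trans hj.2 hj₂j₀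
      have haR : ((j.toNat:ℕ):ℝ) = (j:ℝ) := by exact_mod_cast Int.toNat_of_nonneg hj0
      set a := j.toNat with ha
      set d := (j₀.toNat - 1) - a with hd
      have had : a + d = j₀.toNat - 1 := by omega
      have hadZ : (a:ℤ) + (d:ℤ) = j₀ - 1 := by omega
      have hadR : (a:ℝ) + (d:ℝ) = (j₀:ℝ) - 1 := by exact_mod_cast hadZ
      have h1 : c^d * (n.choose a:ℝ) ≤ (n.choose (j₀.toNat - 1) : ℝ) := by
        rw [← had]
        apply bpow
        rw [hadR, ← hs]
        linarith
      have h2 : (4/5)*c*(c^d * (n.choose a:ℝ)) ≤ (n.choose j₀.toNat : ℝ) :=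
        le_trans (mul_le_mul_of_nonneg_left h1 (by positivity)) bfinal
      have hD : (j₀ - j).toNat = d + 1 := by omega
      rw [hD, inv_pow, mul_assoc, ← div_eq_mul_inv, ← mul_div_assoc,
        le_div_iff₀ (pow_pos hc0 (d+1))]
      have e : (n.choose a:ℝ) * c^(d+1) = c*(c^d * (n.choose a:ℝ)) := by ring
      rw [e]
      linarith only [h2]
    -- numerator is contained in [j₁, j₂]
    have hsub : (Finset.Icc (0 : ℤ) (n : ℤ)).filter
        (fun j : ℤ => (n : ℝ) * (u - δ) ≤ (j : ℝ) ∧ (j : ℝ) < (n : ℝ) * (u - α))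
        ⊆ Finset.Icc j₁ j₂ := by
      intro j hj
      rw [Finset.mem_filter, Finset.mem_Icc] at hj
      rw [Finset.mem_Icc]
      obtain ⟨_, h1, h2⟩ := hj
      constructor
      · exact Int.ceil_le.mpr h1
      · have := Int.lt_ceil.mpr h2
        omega
    -- geometric sum bound
    have hgeo : ∑ j ∈ Finset.Icc j₁ j₂, (c⁻¹)^((j₂-j).toNat) ≤ 1/(1-c⁻¹) := by
      have hinj : ∀ x ∈ Finset.Icc j₁ j₂, ∀ y ∈ Finset.Icc j₁ j₂,
          (fun j : ℤ => (j₂ - j).toNat) x = (fun j : ℤ => (j₂ - j).toNat) y → x = y := by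
        intro x hx y hy hxy
        rw [Finset.mem_Icc] at hx hy
        simp only at hxy
        omega
      calc ∑ j ∈ Finset.Icc j₁ j₂, (c⁻¹)^((j₂-j).toNat)
          = ∑ i ∈ (Finset.Icc j₁ j₂).image (fun j : ℤ => (j₂ - j).toNat), (c⁻¹)^i :=
            (Finset.sum_image hinj).symm
        _ ≤ ∑ i ∈ Finset.range ((j₂-j₁).toNat+1), (c⁻¹)^i := by
            apply Finset.sum_le_sum_of_subset_of_nonneg
            · intro i hi
              rw [Finset.mem_image] at hi
              obtain ⟨j, hj, rfl⟩ := hi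
              rw [Finset.mem_Icc] at hj
              rw [Finset.mem_range]
              omega
            · intro i _ _
              positivity
        _ ≤ 1/(1-c⁻¹) := geom_aux _ hcinv0 hcinv1 _
    -- the head factor
    have hg : (n:ℝ)*α - 1 ≤ ((j₀-j₂).toNat : ℝ) := by
      have hgZ : ((j₀ - j₂).toNat : ℤ) = j₀ - j₂ := by omega
      have hgR : (((j₀-j₂).toNat : ℕ):ℝ) = (j₀:ℝ) - (j₂:ℝ) := by exact_mod_cast hgZ
      rw [hgR]
      have := hj₂lt
      rw [hyval] at this
      linarith
    have hhead : ((c⁻¹)^((j₀-j₂).toNat) : ℝ) ≤ 1/(n:ℝ)^2 := by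
      have e1 : ((c⁻¹)^((j₀-j₂).toNat) : ℝ)
          = Real.exp ((((j₀-j₂).toNat:ℕ):ℝ) * (-Real.log c)) := by
        rw [Real.exp_nat_mul, Real.exp_neg, Real.exp_log hc0]
      rw [e1]
      have e2 : Real.exp ((1 - (n:ℝ)*α)*Real.log c) = 1/(n:ℝ)^2 := by
        rw [sub_mul, one_mul, Real.exp_sub, Real.exp_log hc0, hcnα]
        field_simp
      rw [← e2]
      apply Real.exp_le_exp.mpr
      have h3 := mul_le_mul_of_nonneg_right hg hlogc.le
      nlinarith only [h3]
    -- assemble the numerator bound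
    have hsplit : ∀ j ∈ Finset.Icc j₁ j₂,
        (5/4) * (n.choose j₀.toNat : ℝ) * (c⁻¹)^((j₀ - j).toNat)
        = ((5/4) * (n.choose j₀.toNat : ℝ) * (c⁻¹)^((j₀-j₂).toNat)) * (c⁻¹)^((j₂-j).toNat) := by
      intro j hj
      rw [Finset.mem_Icc] at hj
      have : (j₀ - j).toNat = (j₀-j₂).toNat + (j₂-j).toNat := by omega
      rw [this, pow_add]
      ring
    have hNum : (∑ j ∈ (Finset.Icc (0 : ℤ) (n : ℤ)).filter
          (fun j : ℤ => (n : ℝ) * (u - δ) ≤ (j : ℝ) ∧ (j : ℝ) < (n : ℝ) * (u - α)),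
        (n.choose j.toNat : ℝ))
        ≤ (5/4) * (n.choose j₀.toNat : ℝ) * (1/(n:ℝ)^2) * (1/(1-c⁻¹)) := by
      calc (∑ j ∈ (Finset.Icc (0 : ℤ) (n : ℤ)).filter
          (fun j : ℤ => (n : ℝ) * (u - δ) ≤ (j : ℝ) ∧ (j : ℝ) < (n : ℝ) * (u - α)),
          (n.choose j.toNat : ℝ))
          ≤ ∑ j ∈ Finset.Icc j₁ j₂, (n.choose j.toNat : ℝ) :=
            Finset.sum_le_sum_of_subset_of_nonneg hsub (fun i _ _ => by positivity)
        _ ≤ ∑ j ∈ Finset.Icc j₁ j₂, (5/4) * (n.choose j₀.toNat : ℝ) * (c⁻¹)^((j₀ - j).toNat) :=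
            Finset.sum_le_sum perterm
        _ = ((5/4) * (n.choose j₀.toNat : ℝ) * (c⁻¹)^((j₀-j₂).toNat))
            * ∑ j ∈ Finset.Icc j₁ j₂, (c⁻¹)^((j₂-j).toNat) := by
            rw [Finset.mul_sum]
            exact Finset.sum_congr rfl hsplit
        _ ≤ ((5/4) * (n.choose j₀.toNat : ℝ) * (c⁻¹)^((j₀-j₂).toNat)) * (1/(1-c⁻¹)) := by
            apply mul_le_mul_of_nonneg_left hgeo (by positivity)
        _ ≤ (5/4) * (n.choose j₀.toNat : ℝ) * (1/(n:ℝ)^2) * (1/(1-c⁻¹)) := by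
            have h1 : (0:ℝ) ≤ 1/(1-c⁻¹) := by
              apply le_of_lt; apply div_pos one_pos; linarith
            apply mul_le_mul_of_nonneg_right _ h1
            apply mul_le_mul_of_nonneg_left hhead (by positivity)
    -- final numeric inequality
    have hsq7 : Real.sqrt u ≤ 5/7 := by
      have h1 : u ≤ (5/7:ℝ)^2 := by
        rw [show ((5:ℝ)/7)^2 = 25/49 by norm_num]; linarith only [hu]
      have h2 := Real.sqrt_le_sqrt h1
      rwa [Real.sqrt_sq (by norm_num : (0:ℝ) ≤ 5/7)] at h2
    have hsqpos : 0 < Real.sqrt u := Real.sqrt_pos.mpr hu0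
    have hsqnn : 0 ≤ Real.sqrt u := hsqpos.le
    have hcm1 : 0 < c - 1 := by linarith
    have hloglec : Real.log c ≤ c - 1 := Real.log_le_sub_one_of_pos hc0
    have claimA : (5/4)*Real.sqrt u*(c/(c-1)) ≤ 1 + 2*Real.log n/Real.log c := by
      have e : (5/4)*Real.sqrt u*(c/(c-1)) = ((5/4)*(Real.sqrt u*c))/(c-1) := by
        rw [mul_div_assoc]; ring
      rw [e, div_le_iff₀ hcm1]
      have hXc : (2*Real.log n/Real.log c) * Real.log c = 2*Real.log n :=
        div_mul_cancel₀ _ hlogc.ne'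
      have h1 : Real.sqrt u * c ≤ (5/7)*c := mul_le_mul_of_nonneg_right hsq7 hc0.le
      have h2 : (2*Real.log n/Real.log c) * Real.log c
          ≤ (2*Real.log n/Real.log c)*(c-1) :=
        mul_le_mul_of_nonneg_left hloglec hXnn
      nlinarith only [h1, h2, hXc, hlogn, hcm1, hc1]
    have hNumnn : 0 ≤ (∑ j ∈ (Finset.Icc (0 : ℤ) (n : ℤ)).filter
          (fun j : ℤ => (n : ℝ) * (u - δ) ≤ (j : ℝ) ∧ (j : ℝ) < (n : ℝ) * (u - α)),
        (n.choose j.toNat : ℝ)) := Finset.sum_nonneg (fun i _ => by positivity)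
    have hNd : (∑ j ∈ (Finset.Icc (0 : ℤ) (n : ℤ)).filter
          (fun j : ℤ => (n : ℝ) * (u - δ) ≤ (j : ℝ) ∧ (j : ℝ) < (n : ℝ) * (u - α)),
        (n.choose j.toNat : ℝ))
        / (∑ j ∈ (Finset.Icc (0 : ℤ) (n : ℤ)).filter
          (fun j : ℤ => (n : ℝ) * (u - δ) ≤ (j : ℝ) ∧ (j : ℝ) ≤ (n : ℝ) * u),
        (n.choose j.toNat : ℝ))
        ≤ (∑ j ∈ (Finset.Icc (0 : ℤ) (n : ℤ)).filter
          (fun j : ℤ => (n : ℝ) * (u - δ) ≤ (j : ℝ) ∧ (j : ℝ) < (n : ℝ) * (u - α)),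
        (n.choose j.toNat : ℝ)) / (n.choose j₀.toNat : ℝ) :=
      div_le_div_of_nonneg_left hNumnn hC0pos hSden
    have hB : (∑ j ∈ (Finset.Icc (0 : ℤ) (n : ℤ)).filter
          (fun j : ℤ => (n : ℝ) * (u - δ) ≤ (j : ℝ) ∧ (j : ℝ) < (n : ℝ) * (u - α)),
        (n.choose j.toNat : ℝ)) / (n.choose j₀.toNat : ℝ)
        ≤ (5/4) * (1/(n:ℝ)^2) * (1/(1-c⁻¹)) := by
      rw [div_le_iff₀ hC0pos]
      refine le_trans hNum (le_of_eq ?_)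
      ring
    have hC : (5/4) * (1/(n:ℝ)^2) * (1/(1-c⁻¹)) ≤ δ/((n:ℝ)*Real.sqrt u) := by
      have hic : 1/(1-c⁻¹) = c/(c-1) := by
        have h1 : 1 - c⁻¹ = (c-1)/c := by
          field_simp
        rw [h1, one_div_div]
      rw [hic, le_div_iff₀ (by positivity : (0:ℝ) < (n:ℝ)*Real.sqrt u)]
      have e : (5/4)*(1/(n:ℝ)^2)*(c/(c-1))*((n:ℝ)*Real.sqrt u)
          = ((5/4)*Real.sqrt u*(c/(c-1)))/(n:ℝ) := by
        field_simp
      rw [e, div_le_iff₀ hnR]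
      have h2 : (n:ℝ)*α < (n:ℝ)*δ := mul_lt_mul_of_pos_left hcase hnR
      calc (5/4)*Real.sqrt u*(c/(c-1)) ≤ 1 + 2*Real.log n/Real.log c := claimA
        _ = (n:ℝ)*α := hnα.symm
        _ ≤ (n:ℝ)*δ := h2.le
        _ = δ*(n:ℝ) := by ring
    exact le_trans hNd (le_trans hB hC)
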